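/- Let H be a submonoid of ℕ^k with H ≠ {0}, and let X ⊆ {1,…,k} be maximal independent over H. Then ind H = |X|; that is, H is isomorphic as an additive monoid to a submonoid of ℕ^{|X|}, and whenever H is isomorphic to a submonoid of ℕ^r with r ≥ 1, one has r ≥ |X|. -/

import Mathlib

def coordFn {k : ℕ} (A : Set (Fin k → ℕ)) (i : Fin k) : A → ℚ :=
  fun f => ((f : Fin k → ℕ) i : ℚ)

def IndepOver {k : ℕ} (X : Finset (Fin k)) (A : Set (Fin k → ℕ)) : Prop :=
  LinearIndependent ℚ (fun i : X => coordFn A i.1)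

def MaxIndepOver {k : ℕ} (X : Finset (Fin k)) (A : Set (Fin k → ℕ)) : Prop :=
  IndepOver X A ∧ ∀ Y : Finset (Fin k), X ⊂ Y → ¬ IndepOver Y A

open Pointwise in
def beta {k : ℕ} (H : AddSubmonoid (Fin k → ℕ)) : Set (Fin k → ℕ) :=
  ((H : Set (Fin k → ℕ)) \ {0}) \
    (((H : Set (Fin k → ℕ)) \ {0}) + ((H : Set (Fin k → ℕ)) \ {0}))

def restrictHom {k : ℕ} (X : Finset (Fin k)) : (Fin k → ℕ) →+ (Fin X.card → ℕ) where
  toFun h := fun j => h (X.orderIsoOfFin rfl j).1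
  map_zero' := rfl
  map_add' _ _ := rfl

def IsoToSub {k : ℕ} (H : AddSubmonoid (Fin k → ℕ)) (r : ℕ) : Prop :=
  ∃ K : AddSubmonoid (Fin r → ℕ), Nonempty (H ≃+ K)

noncomputable def indOf {k : ℕ} (H : AddSubmonoid (Fin k → ℕ)) : ℕ :=
  sInf {r : ℕ | 1 ≤ r ∧ IsoToSub H r}

open Module Submodule

noncomputable def iotaQ {k : ℕ} (h : Fin k → ℕ) : Fin k → ℚ := fun j => (h j : ℚ)

lemma iotaQ_inj {k : ℕ} : Function.Injective (iotaQ (k := k)) := by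
  intro a b hab
  funext j
  exact Nat.cast_injective (congrFun hab j)

lemma iotaQ_sum {k n : ℕ} (h : Fin n → (Fin k → ℕ)) (a : Fin n → ℕ) :
    iotaQ (∑ i, a i • h i) = ∑ i, (a i : ℚ) • iotaQ (h i) := by
  funext j
  simp only [iotaQ, Finset.sum_apply, Pi.smul_apply, smul_eq_mul, Nat.cast_sum]
  push_cast
  rfl

def Comb {k n : ℕ} (h : Fin n → (Fin k → ℕ)) : Prop :=
  ∀ a b : Fin n → ℕ, (∑ i, a i • h i) = (∑ i, b i • h i) → a = b

lemma comb_of_indep {k n : ℕ} {h : Fin n → (Fin k → ℕ)}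
    (hi : LinearIndependent ℚ (fun i => iotaQ (h i))) : Comb h := by
  intro a b hab
  have h2 : ∑ i, ((a i : ℚ) - (b i : ℚ)) • iotaQ (h i) = 0 := by
    simp only [sub_smul, Finset.sum_sub_distrib, ← iotaQ_sum, hab, sub_self]
  have := Fintype.linearIndependent_iff.mp hi _ h2
  funext i
  have := sub_eq_zero.mp (this i)
  exact_mod_cast this

lemma indep_of_comb {k n : ℕ} {h : Fin n → (Fin k → ℕ)}
    (hc : Comb h) : LinearIndependent ℚ (fun i => iotaQ (h i)) := by
  rw [← LinearIndependent.iff_fractionRing (R := ℤ) (K := ℚ)]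
  rw [Fintype.linearIndependent_iff]
  intro z hz i
  set a : Fin n → ℕ := fun i => (z i).toNat with ha
  set b : Fin n → ℕ := fun i => (-(z i)).toNat with hb
  have hzab : ∀ i, (a i : ℤ) - (b i : ℤ) = z i := by
    intro i; simp only [ha, hb]; omega
  have key : ∑ i, (a i : ℚ) • iotaQ (h i) = ∑ i, (b i : ℚ) • iotaQ (h i) := by
    have hstep : ∀ i, (a i : ℚ) • iotaQ (h i) - (b i : ℚ) • iotaQ (h i) = z i • iotaQ (h i) := by
      intro i
      rw [← sub_smul]
      rw [← Int.cast_smul_eq_zsmul ℚ]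
      congr 1
      rw [← hzab i]; push_cast; ring
    rw [← sub_eq_zero, ← Finset.sum_sub_distrib]
    simp only [hstep]
    exact hz
  rw [← iotaQ_sum, ← iotaQ_sum] at key
  have := hc a b (iotaQ_inj key)
  have hai : a i = b i := congrFun this i
  have := hzab i
  omega

lemma indepOver_iff {k : ℕ} (Y : Finset (Fin k)) (A : Set (Fin k → ℕ)) :
    IndepOver Y A ↔ ∀ c : Fin k → ℚ,
      (∀ a : A, ∑ i ∈ Y, c i * ((a : Fin k → ℕ) i : ℚ) = 0) → ∀ i ∈ Y, c i = 0 := by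
  constructor
  · intro hI c hc i hi
    have := Fintype.linearIndependent_iff.mp hI (fun i : Y => c i.1) ?_ ⟨i, hi⟩
    · exact this
    · funext a
      simp only [Finset.sum_apply, Pi.smul_apply, smul_eq_mul, coordFn, Pi.zero_apply]
      rw [Finset.sum_coe_sort Y (fun j => c j * ((a : Fin k → ℕ) j : ℚ))]
      exact hc a
  · intro hc
    rw [IndepOver, Fintype.linearIndependent_iff]
    intro g hg i
    set c : Fin k → ℚ := fun j => if h : j ∈ Y then g ⟨j, h⟩ else 0 with hcdef
    have h1 : ∀ a : A, ∑ j ∈ Y, c j * ((a : Fin k → ℕ) j : ℚ) = 0 := by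
      intro a
      have h2 : ∑ j ∈ Y, c j * ((a : Fin k → ℕ) j : ℚ)
          = ∑ j : Y, g j * ((a : Fin k → ℕ) j.1 : ℚ) := by
        rw [← Finset.sum_coe_sort]
        refine Finset.sum_congr rfl fun j _ => ?_
        simp [hcdef, j.2]
      rw [h2]
      have := congrFun hg a
      simpa [coordFn, Finset.sum_apply] using this
    have := hc c h1 i.1 i.2
    simpa [hcdef, i.2] using this

lemma exists_indep_family {k : ℕ} (A : Set (Fin k → ℕ)) (X : Finset (Fin k))
    (hind : IndepOver X A) :
    ∃ h : Fin X.card → (Fin k → ℕ), (∀ m, h m ∈ A) ∧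
      LinearIndependent ℚ (fun m => iotaQ (h m)) := by
  classical
  set W : Submodule ℚ (Fin k → ℚ) := span ℚ (iotaQ '' A) with hW
  set f : X → Module.Dual ℚ W := fun i => (LinearMap.proj i.1).comp W.subtype with hf
  have hfind : LinearIndependent ℚ f := by
    rw [Fintype.linearIndependent_iff]
    intro c hc i
    refine Fintype.linearIndependent_iff.mp hind c ?_ i
    funext a
    have ha : iotaQ (a : Fin k → ℕ) ∈ W := subset_span ⟨a, a.2, rfl⟩
    have := congrFun (congrArg (fun (g : Module.Dual ℚ W) => (g : W → ℚ)) hc) ⟨_, ha⟩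
    simp only [LinearMap.coe_sum, Finset.sum_apply, LinearMap.smul_apply,
      LinearMap.coe_comp, Function.comp_apply, coe_subtype, LinearMap.proj_apply,
      LinearMap.zero_apply, smul_eq_mul] at this
    simpa [coordFn, Finset.sum_apply, iotaQ, hf] using this
  have hcard : X.card ≤ finrank ℚ W := by
    have h1 := hfind.fintype_card_le_finrank
    rw [Fintype.card_coe] at h1
    rwa [Subspace.dual_finrank_eq] at h1
  obtain ⟨t, hts, htspan, htind⟩ := exists_linearIndependent ℚ (iotaQ '' A)
  have htfin : t.Finite := htind.setFinite
  haveI : Fintype t := htfin.fintype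
  have htcard : finrank ℚ W = t.toFinset.card := by
    rw [hW, ← htspan, finrank_span_set_eq_card htind]
  have hle : X.card ≤ Fintype.card t := by
    rw [← Set.toFinset_card]; omega
  let e : Fin X.card ↪ t := (Fin.castLEEmb hle).trans (Fintype.equivFin t).symm.toEmbedding
  have hmem : ∀ m : Fin X.card, ∃ x ∈ A, iotaQ x = (e m : Fin k → ℚ) := by
    intro m; exact hts (e m).2
  choose h hhA hhi using hmem
  refine ⟨h, hhA, ?_⟩
  have : (fun m => iotaQ (h m)) = fun m => ((e m : t) : Fin k → ℚ) := funext hhi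
  rw [this]
  exact htind.comp e e.injective

lemma lower_bound {k r : ℕ} (H : AddSubmonoid (Fin k → ℕ)) (X : Finset (Fin k))
    (hind : IndepOver X (H : Set (Fin k → ℕ))) (hiso : IsoToSub H r) : X.card ≤ r := by
  obtain ⟨K, ⟨φ⟩⟩ := hiso
  obtain ⟨h, hmem, hli⟩ := exists_indep_family (H : Set (Fin k → ℕ)) X hind
  have hcomb : Comb h := comb_of_indep hli
  set g : Fin X.card → (Fin r → ℕ) := fun m => (φ ⟨h m, hmem m⟩ : Fin r → ℕ) with hg
  have hcombg : Comb g := by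
    intro a b hab
    have h1 : (∑ m, a m • φ ⟨h m, hmem m⟩ : K) = ∑ m, b m • φ ⟨h m, hmem m⟩ := by
      apply Subtype.ext
      push_cast
      exact hab
    have h2 := congrArg (φ.symm.toAddMonoidHom) h1
    simp only [map_sum, map_nsmul, AddEquiv.toAddMonoidHom_eq_coe,
      AddMonoidHom.coe_coe, AddEquiv.symm_apply_apply] at h2
    have h3 : (∑ m, a m • h m) = ∑ m, b m • h m := by
      have h4 := congrArg (H.subtype) h2
      simp only [map_sum, map_nsmul, AddSubmonoid.coe_subtype] at h4
      exact h4
    exact hcomb a b h3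
  have hlig : LinearIndependent ℚ (fun m => iotaQ (g m)) := indep_of_comb hcombg
  have := hlig.fintype_card_le_finrank
  simpa [Module.finrank_fin_fun] using this

theorem statement7 {k : ℕ} (hk : 0 < k) (H : AddSubmonoid (Fin k → ℕ)) (hH : H ≠ ⊥)
    (X : Finset (Fin k)) (hX : X.Nonempty)
    (hmax : MaxIndepOver X (H : Set (Fin k → ℕ))) :
    indOf H = X.card ∧ IsoToSub H X.card ∧
      ∀ r : ℕ, 1 ≤ r → IsoToSub H r → X.card ≤ r := by
  classical
  set A : Set (Fin k → ℕ) := (H : Set (Fin k → ℕ)) with hA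
  -- injectivity of restriction on H
  have hinj : ∀ h1 ∈ H, ∀ h2 ∈ H, (∀ i ∈ X, h1 i = h2 i) → h1 = h2 := by
    intro h1 hh1 h2 hh2 hXeq
    funext j
    by_cases hjX : j ∈ X
    · exact hXeq j hjX
    · have hssub : X ⊂ insert j X := Finset.ssubset_insert hjX
      have hdep := hmax.2 _ hssub
      rw [indepOver_iff] at hdep
      push_neg at hdep
      obtain ⟨c, hcsum, i0, hi0mem, hi0⟩ := hdep
      by_cases hcj : c j = 0
      · exfalso
        have hXzero : ∀ i ∈ X, c i = 0 := by
          refine (indepOver_iff X A).mp hmax.1 c ?_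
          intro a
          have := hcsum a
          rwa [Finset.sum_insert hjX, hcj, zero_mul, zero_add] at this
        rcases Finset.mem_insert.mp hi0mem with h | h
        · exact hi0 (h ▸ hcj)
        · exact hi0 (hXzero i0 h)
      · have e1 := hcsum ⟨h1, hh1⟩
        have e2 := hcsum ⟨h2, hh2⟩
        rw [Finset.sum_insert hjX] at e1 e2
        have hsum_eq : ∑ i ∈ X, c i * ((h1 i : ℚ)) = ∑ i ∈ X, c i * ((h2 i : ℚ)) := by
          refine Finset.sum_congr rfl fun i hi => ?_
          rw [hXeq i hi]
        have : c j * (h1 j : ℚ) = c j * (h2 j : ℚ) := by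
          have := e1.trans e2.symm
          rw [hsum_eq] at e1
          linarith [e1, e2]
        have := mul_left_cancel₀ hcj this
        exact_mod_cast this
  -- the isomorphism to a submonoid of ℕ^{X.card}
  have hiso : IsoToSub H X.card := by
    set g : H →+ (Fin X.card → ℕ) := (restrictHom X).comp H.subtype with hgdef
    have hginj : Function.Injective g := by
      intro x y hxy
      apply Subtype.ext
      refine hinj _ x.2 _ y.2 ?_
      intro i hi
      have this1 : x.1 ((X.orderIsoOfFin rfl) ((X.orderIsoOfFin rfl).symm ⟨i, hi⟩)).1
          = y.1 ((X.orderIsoOfFin rfl) ((X.orderIsoOfFin rfl).symm ⟨i, hi⟩)).1 :=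
        congrFun hxy ((X.orderIsoOfFin rfl).symm ⟨i, hi⟩)
      rw [OrderIso.apply_symm_apply] at this1
      exact this1
    refine ⟨AddMonoidHom.mrange g, ⟨AddEquiv.ofBijective g.mrangeRestrict ⟨?_, ?_⟩⟩⟩
    · intro x y hxy
      apply hginj
      exact congrArg Subtype.val hxy
    · exact g.mrangeRestrict_surjective
  have hlow : ∀ r : ℕ, 1 ≤ r → IsoToSub H r → X.card ≤ r := by
    intro r _ hr
    exact lower_bound H X hmax.1 hr
  refine ⟨?_, hiso, hlow⟩
  have hmem : X.card ∈ {r : ℕ | 1 ≤ r ∧ IsoToSub H r} := ⟨hX.card_pos, hiso⟩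
  have hne : {r : ℕ | 1 ≤ r ∧ IsoToSub H r}.Nonempty := ⟨_, hmem⟩
  refine le_antisymm (Nat.sInf_le hmem) ?_
  have hsm := Nat.sInf_mem hne
  exact hlow _ hsm.1 hsm.2
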